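/- Let f : G̃ → G be a harmonic morphism of weighted graphs with G connected, let F ⊆ E(G), and let F̃ = f⁻¹(F). Then the contracted morphism f_F : G̃_{F̃} → G_F, defined by sending each contracted vertex ṽ_{ij} (corresponding to a component G̃_{ij} of the subgraph of G̃ spanned by F̃) to the contracted vertex v_i corresponding to the component G_i = f(G̃_{ij}) of the subgraph spanned by F, is a harmonic morphism of the same global degree as f, where the local degree of f_F at ṽ_{ij} is the global degree of the restriction of f to G̃_{ij} → G_i and all other local degrees are unchanged. Moreover, if f is effective then f_F is effective, and if f is unramified then f_F is unramified. -/

import Mathlib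

open scoped Classical

structure HGraph where
  V : Type
  H : Type
  [fintV : Fintype V]
  [fintH : Fintype H]
  [decV : DecidableEq V]
  [decH : DecidableEq H]
  root : H → V
  inv : H → H
  inv_inv : ∀ h, inv (inv h) = h
  inv_ne : ∀ h, inv h ≠ h

attribute [instance] HGraph.fintV HGraph.fintH HGraph.decV HGraph.decH

namespace HGraph

variable (G : HGraph)

/-- The setoid on half-edges whose classes are the edges. -/
def edgeSetoid : Setoid G.H where
  r h h' := h' = h ∨ h' = G.inv h
  iseqv := by
    refine ⟨fun h => Or.inl rfl, ?_, ?_⟩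
    · rintro a b (rfl | rfl)
      · exact Or.inl rfl
      · exact Or.inr (G.inv_inv a).symm
    · rintro a b c (rfl | rfl) hbc
      · exact hbc
      · rcases hbc with rfl | rfl
        · exact Or.inr rfl
        · exact Or.inl (G.inv_inv a)

instance edgeDec : DecidableRel G.edgeSetoid.r := fun _ _ => instDecidableOr

/-- The edges of a graph: orbits of the involution on half-edges. -/
def Edge := Quotient G.edgeSetoid

instance : Fintype G.Edge := @Quotient.fintype _ _ G.edgeSetoid G.edgeDec
instance : DecidableEq G.Edge := @Quotient.decidableEq _ G.edgeSetoid G.edgeDec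

/-- The edge underlying a half-edge. -/
def edge (h : G.H) : G.Edge := Quotient.mk G.edgeSetoid h

lemma edge_inv (h : G.H) : G.edge (G.inv h) = G.edge h :=
  Quotient.sound (Or.inr (G.inv_inv h).symm)

/-- The valence of a vertex: the number of half-edges rooted at it. -/
def val (v : G.V) : ℕ := (Finset.univ.filter fun h => G.root h = v).card

/-- Two vertices are adjacent through an edge belonging to `S`. -/
def adjOn (S : Finset G.Edge) (v w : G.V) : Prop :=
  ∃ h, G.edge h ∈ S ∧ G.root h = v ∧ G.root (G.inv h) = w

/-- The spanning subgraph with edge set `S` is connected. -/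
def ConnectedOn (S : Finset G.Edge) : Prop :=
  ∀ v w : G.V, Relation.ReflTransGen (G.adjOn S) v w

/-- The graph is connected. -/
def Connected : Prop := Nonempty G.V ∧ G.ConnectedOn Finset.univ

/-- Euler characteristic of a vertex, for a genus function `gV`. -/
def chiZ (gV : G.V → ℤ) (v : G.V) : ℤ := 2 - 2 * gV v - G.val v

/-- The genus of a (connected) weighted graph. -/
def genusZ (gV : G.V → ℤ) : ℤ :=
  (Fintype.card G.Edge : ℤ) - Fintype.card G.V + 1 + ∑ v, gV v

/-- The number of connected components of the spanning subgraph with edge set `S`. -/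
noncomputable def ncomp (S : Finset G.Edge) : ℕ :=
  Nat.card (Quotient (Relation.EqvGen.setoid (G.adjOn S)))

end HGraph

/-- A harmonic morphism of graphs: a graph morphism together with local degrees. -/
structure HarmonicTo (Gt G : HGraph) where
  fV : Gt.V → G.V
  fH : Gt.H → G.H
  root_comm : ∀ h, G.root (fH h) = fV (Gt.root h)
  inv_comm : ∀ h, fH (Gt.inv h) = G.inv (fH h)
  dV : Gt.V → ℕ
  dH : Gt.H → ℕ
  dV_pos : ∀ v, 0 < dV v
  dH_pos : ∀ h, 0 < dH h
  dH_inv : ∀ h, dH (Gt.inv h) = dH h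
  harm : ∀ (w : Gt.V) (h : G.H), G.root h = fV w →
    dV w = ∑ x ∈ Finset.univ.filter (fun x => Gt.root x = w ∧ fH x = h), dH x

namespace HarmonicTo

variable {Gt G : HGraph} (f : HarmonicTo Gt G)

/-- The induced map on edges. -/
def fE : Gt.Edge → G.Edge :=
  Quotient.lift (fun h => G.edge (f.fH h)) (by
    rintro a b (rfl | rfl)
    · rfl
    · show G.edge (f.fH a) = G.edge (f.fH (Gt.inv a))
      rw [f.inv_comm]
      exact (G.edge_inv _).symm)

/-- The local degree of an edge. -/
def dE : Gt.Edge → ℕ :=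
  Quotient.lift f.dH (by
    rintro a b (rfl | rfl)
    · rfl
    · exact (f.dH_inv a).symm)

/-- The ramification degree at a vertex of the source. -/
def Ram (gVt : Gt.V → ℤ) (gV : G.V → ℤ) (w : Gt.V) : ℤ :=
  (f.dV w : ℤ) * G.chiZ gV (f.fV w) - Gt.chiZ gVt w

end HarmonicTo

namespace HGraph

/-- The setoid on vertices generated by adjacency through edges in `F`; its classes are the
connected components of the subgraph spanned by `F` (together with untouched vertices as
singleton classes). -/
def contractSetoid (G : HGraph) (F : Finset G.Edge) : Setoid G.V :=
  Relation.EqvGen.setoid (G.adjOn F)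

/-- The contraction of a graph along a set of edges `F`: each connected component of the
subgraph spanned by `F` is contracted to a single vertex, and the edges in `F` are removed. -/
noncomputable def contract (G : HGraph) (F : Finset G.Edge) : HGraph where
  V := Quotient (G.contractSetoid F)
  H := {h : G.H // G.edge h ∉ F}
  fintV := Fintype.ofFinite _
  decV := Classical.decEq _
  root h := Quotient.mk (G.contractSetoid F) (G.root h.1)
  inv h := ⟨G.inv h.1, by rw [G.edge_inv]; exact h.2⟩
  inv_inv h := Subtype.ext (G.inv_inv h.1)
  inv_ne h := fun hh => G.inv_ne h.1 (congrArg Subtype.val hh)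

/-- The genus function on the contraction: the genus of a contracted vertex is the genus of the
corresponding connected component of the subgraph spanned by `F` (for an uncontracted vertex
this is just its original genus). -/
noncomputable def contractGenus (G : HGraph) (F : Finset G.Edge) (gV : G.V → ℕ)
    (c : (G.contract F).V) : ℤ :=
  (Nat.card {e : G.Edge // e ∈ F ∧
      Quotient.mk (G.contractSetoid F) (G.root (Quotient.out e)) = c} : ℤ)
    - Nat.card {v : G.V // Quotient.mk (G.contractSetoid F) v = c} + 1
    + ∑ᶠ (v : G.V) (_ : Quotient.mk (G.contractSetoid F) v = c), (gV v : ℤ)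


end HGraph

namespace HarmonicTo

variable {Gt G : HGraph} (f : HarmonicTo Gt G)

/-- The preimage of an edge set under a harmonic morphism. -/
def preim (F : Finset G.Edge) : Finset Gt.Edge := Finset.univ.filter (fun e => f.fE e ∈ F)

/-- The vertex map of the contracted morphism: a contracted vertex (component of the subgraph
spanned by `f⁻¹(F)`) is sent to the corresponding contracted vertex of `G_F`. -/
noncomputable def conFV (F : Finset G.Edge) :
    (Gt.contract (f.preim F)).V → (G.contract F).V :=
  Quotient.lift (fun w => Quotient.mk (G.contractSetoid F) (f.fV w)) (by
    intro a b hab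
    apply Quotient.sound
    have hab' : Relation.EqvGen (Gt.adjOn (f.preim F)) a b := hab
    clear hab
    show Relation.EqvGen (G.adjOn F) (f.fV a) (f.fV b)
    induction hab' with
    | rel x y hxy =>
      obtain ⟨h, hmem, hx, hy⟩ := hxy
      refine Relation.EqvGen.rel _ _ ⟨f.fH h, ?_, ?_, ?_⟩
      · have : f.fE (Gt.edge h) ∈ F := by
          simpa [HarmonicTo.preim] using hmem
        exact this
      · rw [f.root_comm, hx]
      · rw [← f.inv_comm, f.root_comm, hy]
    | refl x => exact Relation.EqvGen.refl _
    | symm x y _ ih => exact Relation.EqvGen.symm _ _ ih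
    | trans x y z _ _ ih1 ih2 => exact Relation.EqvGen.trans _ _ _ ih1 ih2)

/-- The half-edge map of the contracted morphism. -/
noncomputable def conFH (F : Finset G.Edge) :
    (Gt.contract (f.preim F)).H → (G.contract F).H :=
  fun h => ⟨f.fH h.1, fun hc => h.2 (by
    simp only [preim, Finset.mem_filter, Finset.mem_univ, true_and]
    exact hc)⟩

/-- The local vertex degree of the contracted morphism: at a contracted vertex it is the global
degree of the restriction of `f` to the corresponding component (computed at a representative
vertex of the image component); at an uncontracted vertex it is the original local degree. -/
noncomputable def conDV (F : Finset G.Edge) : (Gt.contract (f.preim F)).V → ℕ :=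
  fun c => ∑ w ∈ Finset.univ.filter (fun w : Gt.V =>
      Quotient.mk (Gt.contractSetoid (f.preim F)) w = c ∧ f.fV w = f.fV (Quotient.out c)),
    f.dV w

/-- The local half-edge degree of the contracted morphism (unchanged). -/
def conDH (F : Finset G.Edge) : (Gt.contract (f.preim F)).H → ℕ := fun h => f.dH h.1

end HarmonicTo


section Aux

namespace HGraph

variable (K : HGraph)

lemma edge_cases {h h' : K.H} (e : K.edge h = K.edge h') : h' = h ∨ h' = K.inv h :=
  Quotient.exact e

lemma root_inv_classEq {S : Finset K.Edge} {h : K.H} (hS : K.edge h ∈ S) :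
    Quotient.mk (K.contractSetoid S) (K.root (K.inv h))
      = Quotient.mk (K.contractSetoid S) (K.root h) :=
  Quotient.sound (Relation.EqvGen.symm _ _ (Relation.EqvGen.rel _ _ ⟨h, hS, rfl, rfl⟩))

lemma sum_val_class (S : Finset K.Edge) (c : (K.contract S).V) :
    (Finset.univ.filter
        (fun h : K.H => Quotient.mk (K.contractSetoid S) (K.root h) = c)).card
      = ∑ v ∈ Finset.univ.filter
          (fun v => Quotient.mk (K.contractSetoid S) v = c), K.val v := by
  rw [Finset.card_eq_sum_card_fiberwise (f := K.root)
      (t := Finset.univ.filter (fun v => Quotient.mk (K.contractSetoid S) v = c))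
      (fun h hh => by
        exact Finset.mem_filter.mpr ⟨Finset.mem_univ _, (Finset.mem_filter.mp hh).2⟩)]
  refine Finset.sum_congr rfl fun v hv => ?_
  simp only [Finset.mem_filter, Finset.mem_univ, true_and] at hv
  unfold HGraph.val
  congr 1
  ext h
  simp only [Finset.mem_filter, Finset.mem_univ, true_and]
  exact ⟨fun hh => hh.2, fun hh => ⟨by rw [hh, hv], hh⟩⟩

lemma card_half_in (S : Finset K.Edge) (c : (K.contract S).V) :
    (Finset.univ.filter (fun h : K.H => K.edge h ∈ S ∧
        Quotient.mk (K.contractSetoid S) (K.root h) = c)).card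
      = 2 * (Finset.univ.filter (fun e : K.Edge => e ∈ S ∧
          Quotient.mk (K.contractSetoid S) (K.root (Quotient.out e)) = c)).card := by
  rw [Finset.card_eq_sum_card_fiberwise (f := K.edge)
      (t := Finset.univ.filter (fun e : K.Edge => e ∈ S ∧
          Quotient.mk (K.contractSetoid S) (K.root (Quotient.out e)) = c))
      (fun h hh => by
        replace hh := (Finset.mem_filter.mp hh).2
        refine Finset.mem_filter.mpr ⟨Finset.mem_univ _, ?_⟩
        refine ⟨hh.1, ?_⟩
        have hout : K.edge ((K.edge h).out) = K.edge h := Quotient.out_eq _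
        rcases K.edge_cases hout with h1 | h1
        · rw [← h1]; exact hh.2
        · have h2 := congrArg K.inv h1
          rw [K.inv_inv] at h2
          rw [← h2, K.root_inv_classEq hh.1]
          exact hh.2)]
  rw [Finset.sum_congr rfl (fun e he => ?_), Finset.sum_const, smul_eq_mul, mul_comm]
  simp only [Finset.mem_filter, Finset.mem_univ, true_and] at he
  have hset : (Finset.univ.filter (fun h : K.H => K.edge h ∈ S ∧
        Quotient.mk (K.contractSetoid S) (K.root h) = c)).filter (fun h => K.edge h = e)
      = {Quotient.out e, K.inv (Quotient.out e)} := by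
    have houte : K.edge (Quotient.out e) = e := Quotient.out_eq _
    ext h
    simp only [Finset.mem_filter, Finset.mem_univ, true_and, Finset.mem_insert,
      Finset.mem_singleton]
    constructor
    · rintro ⟨-, h2⟩
      exact K.edge_cases (houte.trans h2.symm)
    · rintro (rfl | rfl)
      · exact ⟨⟨by rw [houte]; exact he.1, he.2⟩, houte⟩
      · refine ⟨⟨?_, ?_⟩, ?_⟩
        · rw [K.edge_inv, houte]; exact he.1
        · rw [K.root_inv_classEq (S := S) (by rw [houte]; exact he.1)]
          exact he.2
        · rw [K.edge_inv, houte]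
  rw [hset, Finset.card_pair (Ne.symm (K.inv_ne _))]

lemma val_contract (S : Finset K.Edge) (c : (K.contract S).V) :
    (K.contract S).val c
      = (Finset.univ.filter (fun h : K.H => K.edge h ∉ S ∧
          Quotient.mk (K.contractSetoid S) (K.root h) = c)).card := by
  unfold HGraph.val
  refine Finset.card_bij (fun h _ => h.1) ?_ ?_ ?_
  · intro a ha
    simp only [Finset.mem_filter, Finset.mem_univ, true_and] at ha ⊢
    exact ⟨a.2, ha⟩
  · intro a _ b _ hab
    exact Subtype.ext hab
  · intro b hb
    simp only [Finset.mem_filter, Finset.mem_univ, true_and] at hb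
    exact ⟨⟨b, hb.1⟩, Finset.mem_filter.mpr ⟨Finset.mem_univ _, hb.2⟩, rfl⟩

lemma chiZ_contract (S : Finset K.Edge) (gK : K.V → ℕ) (c : (K.contract S).V) :
    (K.contract S).chiZ (K.contractGenus S gK) c
      = ∑ v ∈ Finset.univ.filter
          (fun v => Quotient.mk (K.contractSetoid S) v = c),
          K.chiZ (fun u => (gK u : ℤ)) v := by
  classical
  set Vc := Finset.univ.filter
      (fun v => Quotient.mk (K.contractSetoid S) v = c) with hVc
  set Ec := Finset.univ.filter (fun e : K.Edge => e ∈ S ∧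
      Quotient.mk (K.contractSetoid S) (K.root (Quotient.out e)) = c) with hEc
  have hgen : K.contractGenus S gK c
      = (Ec.card : ℤ) - Vc.card + 1 + ∑ v ∈ Vc, (gK v : ℤ) := by
    unfold HGraph.contractGenus
    congr 2
    · congr 2
      · rw [Nat.card_eq_fintype_card, Fintype.card_subtype]
      · rw [Nat.card_eq_fintype_card, Fintype.card_subtype]
    · exact finsum_cond_eq_sum_of_cond_iff _ (fun {v} _ => by simp [hVc])
  have hval : ((K.contract S).val c : ℤ) + 2 * Ec.card = ∑ v ∈ Vc, (K.val v : ℤ) := by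
    have hsplit := Finset.card_filter_add_card_filter_not
      (s := Finset.univ.filter
        (fun h : K.H => Quotient.mk (K.contractSetoid S) (K.root h) = c))
      (p := fun h => K.edge h ∈ S)
    rw [Finset.filter_filter, Finset.filter_filter] at hsplit
    have h1 : (Finset.univ.filter (fun h : K.H =>
        Quotient.mk (K.contractSetoid S) (K.root h) = c ∧ K.edge h ∈ S)).card
        = 2 * Ec.card := by
      rw [← K.card_half_in S c]; congr 1; ext h; simp [and_comm]
    have h2 : (K.contract S).val c = (Finset.univ.filter (fun h : K.H =>
        Quotient.mk (K.contractSetoid S) (K.root h) = c ∧ ¬ K.edge h ∈ S)).card := by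
      rw [K.val_contract S c]; congr 1; ext h; simp [and_comm]
    have h3 := K.sum_val_class S c
    have : ∑ v ∈ Vc, (K.val v : ℤ)
        = ((∑ v ∈ Vc, K.val v : ℕ) : ℤ) := by push_cast; rfl
    rw [this, ← h3, ← hsplit, h1, h2]
    push_cast; ring
  unfold HGraph.chiZ
  rw [hgen]
  rw [Finset.sum_sub_distrib, Finset.sum_sub_distrib, Finset.sum_const]
  simp only [nsmul_eq_mul, ← Finset.mul_sum]
  have := hval
  push_cast at this ⊢
  linarith [this]

end HGraph

end Aux

namespace HarmonicTo

variable {Gt G : HGraph} (f : HarmonicTo Gt G) (F : Finset G.Edge)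

lemma fE_edge (x : Gt.H) : f.fE (Gt.edge x) = G.edge (f.fH x) := rfl

lemma mem_preim {e : Gt.Edge} : e ∈ f.preim F ↔ f.fE e ∈ F := by
  simp [HarmonicTo.preim]

/-- The sum of local degrees over vertices of the component `c` lying over `v`. -/
noncomputable def Ncv (c : (Gt.contract (f.preim F)).V) (v : G.V) : ℕ :=
  ∑ w ∈ Finset.univ.filter (fun w : Gt.V =>
      Quotient.mk (Gt.contractSetoid (f.preim F)) w = c ∧ f.fV w = v), f.dV w

lemma conDV_eq (c : (Gt.contract (f.preim F)).V) :
    f.conDV F c = f.Ncv F c (f.fV (Quotient.out c)) := rfl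

lemma conFV_mk (w : Gt.V) :
    f.conFV F (Quotient.mk (Gt.contractSetoid (f.preim F)) w)
      = Quotient.mk (G.contractSetoid F) (f.fV w) := rfl

lemma conFV_out (c : (Gt.contract (f.preim F)).V) :
    f.conFV F c = Quotient.mk (G.contractSetoid F) (f.fV (Quotient.out c)) := by
  conv_lhs => rw [← Quotient.out_eq c]
  rfl

lemma Ncv_eq_sum_dH (c : (Gt.contract (f.preim F)).V) (h0 : G.H) :
    f.Ncv F c (G.root h0)
      = ∑ x ∈ Finset.univ.filter (fun x : Gt.H =>
          Quotient.mk (Gt.contractSetoid (f.preim F)) (Gt.root x) = c ∧ f.fH x = h0),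
          f.dH x := by
  rw [← Finset.sum_fiberwise_of_maps_to (g := Gt.root)
      (t := Finset.univ.filter (fun w : Gt.V =>
        Quotient.mk (Gt.contractSetoid (f.preim F)) w = c ∧ f.fV w = G.root h0))
      (fun x hx => by
        simp only [Finset.mem_filter, Finset.mem_univ, true_and] at hx ⊢
        exact ⟨hx.1, by rw [← hx.2]; exact (f.root_comm x).symm⟩)]
  unfold Ncv
  refine Finset.sum_congr rfl fun w hw => ?_
  simp only [Finset.mem_filter, Finset.mem_univ, true_and] at hw
  rw [Finset.filter_filter, f.harm w h0 hw.2.symm]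
  congr 1
  ext x
  simp only [Finset.mem_filter, Finset.mem_univ, true_and]
  constructor
  · rintro ⟨h3, h2⟩; exact ⟨⟨by rw [h3, hw.1], h2⟩, h3⟩
  · rintro ⟨⟨-, h2⟩, h3⟩; exact ⟨h3, h2⟩

lemma Ncv_step (c : (Gt.contract (f.preim F)).V) {v v' : G.V}
    (hadj : G.adjOn F v v') : f.Ncv F c v = f.Ncv F c v' := by
  obtain ⟨h0, hF, hv, hv'⟩ := hadj
  subst hv; subst hv'
  rw [f.Ncv_eq_sum_dH, f.Ncv_eq_sum_dH]
  refine Finset.sum_nbij' (i := Gt.inv) (j := Gt.inv) ?_ ?_ ?_ ?_ ?_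
  · intro x hx
    simp only [Finset.mem_filter, Finset.mem_univ, true_and] at hx ⊢
    refine ⟨?_, by rw [f.inv_comm, hx.2]⟩
    have hmem : Gt.edge x ∈ f.preim F := by
      rw [f.mem_preim F, f.fE_edge, hx.2]; exact hF
    rw [Gt.root_inv_classEq hmem]; exact hx.1
  · intro x hx
    simp only [Finset.mem_filter, Finset.mem_univ, true_and] at hx ⊢
    refine ⟨?_, by rw [f.inv_comm, hx.2, G.inv_inv]⟩
    have hmem : Gt.edge x ∈ f.preim F := by
      rw [f.mem_preim F, f.fE_edge, hx.2, G.edge_inv]; exact hF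
    rw [Gt.root_inv_classEq hmem]; exact hx.1
  · intro x _; exact Gt.inv_inv x
  · intro x _; exact Gt.inv_inv x
  · intro x _; exact (f.dH_inv x).symm

lemma Ncv_eqv (c : (Gt.contract (f.preim F)).V) {v v' : G.V}
    (h : Relation.EqvGen (G.adjOn F) v v') : f.Ncv F c v = f.Ncv F c v' := by
  induction h with
  | rel x y hxy => exact f.Ncv_step F c hxy
  | refl x => rfl
  | symm x y _ ih => exact ih.symm
  | trans x y z _ _ ih1 ih2 => exact ih1.trans ih2

lemma ram_sum (gVt : Gt.V → ℕ) (gV : G.V → ℕ) (c : (Gt.contract (f.preim F)).V) :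
    (f.conDV F c : ℤ) * (G.contract F).chiZ (G.contractGenus F gV) (f.conFV F c)
        - (Gt.contract (f.preim F)).chiZ (Gt.contractGenus (f.preim F) gVt) c
      = ∑ w ∈ Finset.univ.filter
          (fun w => Quotient.mk (Gt.contractSetoid (f.preim F)) w = c),
          f.Ram (fun u => (gVt u : ℤ)) (fun u => (gV u : ℤ)) w := by
  rw [HGraph.chiZ_contract, HGraph.chiZ_contract]
  unfold HarmonicTo.Ram
  rw [Finset.sum_sub_distrib]
  congr 1
  rw [Finset.mul_sum]
  rw [← Finset.sum_fiberwise_of_maps_to (g := f.fV)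
      (s := Finset.univ.filter
        (fun w => Quotient.mk (Gt.contractSetoid (f.preim F)) w = c))
      (t := Finset.univ.filter
        (fun v => Quotient.mk (G.contractSetoid F) v = f.conFV F c))
      (fun w hw => by
        simp only [Finset.mem_filter, Finset.mem_univ, true_and] at hw ⊢
        rw [← hw, ← f.conFV_mk F w])
      (f := fun w => (f.dV w : ℤ) * G.chiZ (fun u => (gV u : ℤ)) (f.fV w))]
  refine Finset.sum_congr rfl fun v hv => ?_
  simp only [Finset.mem_filter, Finset.mem_univ, true_and] at hv
  have hNcv : f.conDV F c = f.Ncv F c v := by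
    rw [f.conDV_eq F c]
    refine f.Ncv_eqv F c ?_
    exact Relation.EqvGen.symm _ _
      (Quotient.exact (hv.trans (f.conFV_out F c)))
  rw [hNcv]
  unfold Ncv
  rw [Finset.filter_filter]
  push_cast
  rw [Finset.sum_mul]
  refine Finset.sum_congr rfl fun w hw => ?_
  simp only [Finset.mem_filter, Finset.mem_univ, true_and] at hw
  rw [hw.2]

end HarmonicTo

/-- The contraction `f_F : G̃_{F̃} → G_F` of a harmonic morphism `f : G̃ → G`
along an edge set `F ⊆ E(G)` (with `F̃ = f⁻¹(F)`), with local vertex degrees given at contracted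
vertices by the global degrees of the restrictions of `f` to the contracted components and
unchanged elsewhere, is a harmonic morphism of the same global degree as `f`; moreover if `f` is
effective then so is `f_F`, and if `f` is unramified then so is `f_F`. -/
theorem contract_harmonic (Gt G : HGraph) (gVt : Gt.V → ℕ) (gV : G.V → ℕ)
    (f : HarmonicTo Gt G) (hGconn : G.Connected)
    (F : Finset G.Edge) (D : ℕ)
    (hD : ∀ v : G.V, ∑ w ∈ Finset.univ.filter (fun w => f.fV w = v), f.dV w = D) :
    -- `f_F` is a morphism of graphs:
    (∀ h : (Gt.contract (f.preim F)).H,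
        (G.contract F).root (f.conFH F h) = f.conFV F ((Gt.contract (f.preim F)).root h)) ∧
    (∀ h, f.conFH F ((Gt.contract (f.preim F)).inv h) = (G.contract F).inv (f.conFH F h)) ∧
    -- the local degrees are positive and make it harmonic:
    (∀ c, 0 < f.conDV F c) ∧
    (∀ h, 0 < f.conDH F h) ∧
    (∀ h, f.conDH F ((Gt.contract (f.preim F)).inv h) = f.conDH F h) ∧
    (∀ (c : (Gt.contract (f.preim F)).V) (h : (G.contract F).H),
        (G.contract F).root h = f.conFV F c →
        f.conDV F c = ∑ x ∈ Finset.univ.filter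
          (fun x : (Gt.contract (f.preim F)).H =>
            (Gt.contract (f.preim F)).root x = c ∧ f.conFH F x = h), f.conDH F x) ∧
    -- `f_F` has the same global degree as `f`:
    (∀ v : (G.contract F).V,
        ∑ c ∈ Finset.univ.filter (fun c => f.conFV F c = v), f.conDV F c = D) ∧
    -- if `f` is effective then so is `f_F`:
    ((∀ w : Gt.V, 0 ≤ f.Ram (fun u => (gVt u : ℤ)) (fun u => (gV u : ℤ)) w) →
      ∀ c : (Gt.contract (f.preim F)).V,
        0 ≤ (f.conDV F c : ℤ) * (G.contract F).chiZ (G.contractGenus F gV) (f.conFV F c)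
            - (Gt.contract (f.preim F)).chiZ (Gt.contractGenus (f.preim F) gVt) c) ∧
    -- if `f` is unramified then so is `f_F`:
    ((∀ w : Gt.V, f.Ram (fun u => (gVt u : ℤ)) (fun u => (gV u : ℤ)) w = 0) →
      ∀ c : (Gt.contract (f.preim F)).V,
        (f.conDV F c : ℤ) * (G.contract F).chiZ (G.contractGenus F gV) (f.conFV F c)
            - (Gt.contract (f.preim F)).chiZ (Gt.contractGenus (f.preim F) gVt) c = 0) := by
  refine ⟨?_, ?_, ?_, ?_, ?_, ?_, ?_, ?_, ?_⟩
  · intro h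
    exact congrArg (Quotient.mk (G.contractSetoid F)) (f.root_comm h.1)
  · intro h
    exact Subtype.ext (f.inv_comm h.1)
  · intro c
    rw [f.conDV_eq F c]
    unfold HarmonicTo.Ncv
    refine Finset.sum_pos' (fun w _ => Nat.zero_le _) ⟨Quotient.out c, ?_, f.dV_pos _⟩
    simp [Quotient.out_eq]
    exact Quotient.out_eq c
  · intro h; exact f.dH_pos h.1
  · intro h; exact f.dH_inv h.1
  · intro c h hroot
    have hsub : ∑ x ∈ Finset.univ.filter
          (fun x : (Gt.contract (f.preim F)).H =>
            (Gt.contract (f.preim F)).root x = c ∧ f.conFH F x = h), f.conDH F x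
        = ∑ x ∈ Finset.univ.filter (fun x : Gt.H =>
            Quotient.mk (Gt.contractSetoid (f.preim F)) (Gt.root x) = c ∧ f.fH x = h.1),
            f.dH x := by
      refine Finset.sum_bij (fun x _ => x.1) ?_ ?_ ?_ ?_
      · intro a ha
        simp only [Finset.mem_filter, Finset.mem_univ, true_and] at ha ⊢
        exact ⟨ha.1, congrArg Subtype.val ha.2⟩
      · intro a _ b _ hab
        exact Subtype.ext hab
      · intro b hb
        simp only [Finset.mem_filter, Finset.mem_univ, true_and] at hb
        refine ⟨⟨b, ?_⟩, ?_, rfl⟩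
        · show Gt.edge b ∉ f.preim F
          rw [f.mem_preim F, f.fE_edge, hb.2]
          exact h.2
        · refine Finset.mem_filter.mpr ⟨Finset.mem_univ _, ?_⟩
          exact ⟨hb.1, Subtype.ext hb.2⟩
      · intro a _; rfl
    rw [hsub, ← f.Ncv_eq_sum_dH F c h.1, f.conDV_eq F c]
    have hq : Quotient.mk (G.contractSetoid F) (G.root h.1)
        = Quotient.mk (G.contractSetoid F) (f.fV (Quotient.out c)) :=
      hroot.trans (f.conFV_out F c)
    exact f.Ncv_eqv F c (Relation.EqvGen.symm _ _ (Quotient.exact hq))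
  · intro v
    have hmap : ∀ w ∈ Finset.univ.filter (fun w : Gt.V => f.fV w = Quotient.out v),
        Quotient.mk (Gt.contractSetoid (f.preim F)) w
          ∈ Finset.univ.filter (fun c => f.conFV F c = v) := by
      intro w hw
      simp only [Finset.mem_filter, Finset.mem_univ, true_and] at hw ⊢
      refine Finset.mem_filter.mpr ⟨Finset.mem_univ (α := (Gt.contract (f.preim F)).V) _, ?_⟩
      rw [f.conFV_mk F w, hw]
      exact Quotient.out_eq v
    calc ∑ c ∈ Finset.univ.filter (fun c => f.conFV F c = v), f.conDV F c
        = ∑ c ∈ Finset.univ.filter (fun c => f.conFV F c = v),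
            f.Ncv F c (Quotient.out v) := by
          refine Finset.sum_congr rfl fun c hc => ?_
          simp only [Finset.mem_filter, Finset.mem_univ, true_and] at hc
          rw [f.conDV_eq F c]
          exact f.Ncv_eqv F c (Quotient.exact
            ((f.conFV_out F c).symm.trans (hc.trans (Quotient.out_eq v).symm)))
      _ = ∑ w ∈ Finset.univ.filter (fun w : Gt.V => f.fV w = Quotient.out v), f.dV w := by
          rw [← Finset.sum_fiberwise_of_maps_to
            (g := fun w => Quotient.mk (Gt.contractSetoid (f.preim F)) w) hmap (f := f.dV)]
          refine Finset.sum_congr rfl fun c _ => ?_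
          unfold HarmonicTo.Ncv
          rw [Finset.filter_filter]
          congr 1
          ext w
          simp only [Finset.mem_filter, Finset.mem_univ, true_and]
          exact and_comm
      _ = D := hD _
  · intro heff c
    rw [f.ram_sum]
    exact Finset.sum_nonneg fun w _ => heff w
  · intro hunr c
    rw [f.ram_sum]
    exact Finset.sum_eq_zero fun w _ => hunr w
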